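/- arXiv:1410.1553 — 5 statements merged into one kernel-verified Lean document; each statement's English description precedes it below -/
import Mathlib

section
/- Let A₁,…,A_m be symmetric n×n real matrices. Then max over unit vectors x₁, x₂ ∈ ℝⁿ of the Euclidean norm of the vector (x₁ᵀA₁x₂, …, x₁ᵀA_mx₂) equals max over unit vectors x ∈ ℝⁿ of the Euclidean norm of (xᵀA₁x, …, xᵀA_mx). -/
open Matrix BigOperators


lemma herm_symm {n : ℕ} {A : Matrix (Fin n) (Fin n) ℝ} (hA : A.IsHermitian)
    (x y : Fin n → ℝ) : x ⬝ᵥ A.mulVec y = y ⬝ᵥ A.mulVec x := by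
  have hT : A.transpose = A := by
    ext j k
    have := congrFun (congrFun hA j) k
    simpa [Matrix.conjTranspose_apply] using this
  rw [Matrix.dotProduct_mulVec, ← Matrix.mulVec_transpose, hT, dotProduct_comm]

lemma bilin_bound {n : ℕ} (A : Matrix (Fin n) (Fin n) ℝ) (x y : Fin n → ℝ)
    (hx : ∑ i, x i ^ 2 = 1) (hy : ∑ i, y i ^ 2 = 1) :
    |x ⬝ᵥ A.mulVec y| ≤ ∑ j, ∑ k, |A j k| := by
  have hx1 : ∀ j, |x j| ≤ 1 := by
    intro j
    have h1 : x j ^ 2 ≤ 1 := hx ▸ Finset.single_le_sum (fun i _ => sq_nonneg (x i)) (Finset.mem_univ j)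
    nlinarith [abs_nonneg (x j), sq_abs (x j)]
  have hy1 : ∀ j, |y j| ≤ 1 := by
    intro j
    have h1 : y j ^ 2 ≤ 1 := hy ▸ Finset.single_le_sum (fun i _ => sq_nonneg (y i)) (Finset.mem_univ j)
    nlinarith [abs_nonneg (y j), sq_abs (y j)]
  calc |x ⬝ᵥ A.mulVec y| = |∑ j, ∑ k, x j * (A j k * y k)| := by
        simp [dotProduct, Matrix.mulVec, Finset.mul_sum]
    _ ≤ ∑ j, ∑ k, |x j * (A j k * y k)| := by
        refine (Finset.abs_sum_le_sum_abs _ _).trans (Finset.sum_le_sum fun j _ => ?_)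
        exact Finset.abs_sum_le_sum_abs _ _
    _ ≤ ∑ j, ∑ k, |A j k| := by
        refine Finset.sum_le_sum fun j _ => Finset.sum_le_sum fun k _ => ?_
        rw [abs_mul, abs_mul]
        calc |x j| * (|A j k| * |y k|) ≤ 1 * (|A j k| * 1) := by
              apply mul_le_mul (hx1 j) _ (by positivity) zero_le_one
              exact mul_le_mul_of_nonneg_left (hy1 k) (abs_nonneg _)
          _ = |A j k| := by ring


/-- `max_{|x₁|=|x₂|=1} ‖(x₁ᵀA₁x₂,…,x₁ᵀA_mx₂)‖ = max_{|x|=1} ‖(xᵀA₁x,…,xᵀA_mx)‖`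
for symmetric matrices `Aᵢ`. -/
theorem sup_bilinear_eq_sup_quadratic {m n : ℕ} (hm : 0 < m) (hn : 0 < n)
    (A : Fin m → Matrix (Fin n) (Fin n) ℝ) (hA : ∀ i, (A i).IsHermitian) :
    sSup {r : ℝ | ∃ x₁ x₂ : Fin n → ℝ, (∑ i, x₁ i ^ 2) = 1 ∧ (∑ i, x₂ i ^ 2) = 1 ∧
        r = Real.sqrt (∑ i, (x₁ ⬝ᵥ (A i).mulVec x₂) ^ 2)} =
    sSup {r : ℝ | ∃ x : Fin n → ℝ, (∑ i, x i ^ 2) = 1 ∧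
        r = Real.sqrt (∑ i, (x ⬝ᵥ (A i).mulVec x) ^ 2)} := by
  set SB : Set ℝ := {r : ℝ | ∃ x₁ x₂ : Fin n → ℝ, (∑ i, x₁ i ^ 2) = 1 ∧ (∑ i, x₂ i ^ 2) = 1 ∧
        r = Real.sqrt (∑ i, (x₁ ⬝ᵥ (A i).mulVec x₂) ^ 2)} with hSB
  set SQ : Set ℝ := {r : ℝ | ∃ x : Fin n → ℝ, (∑ i, x i ^ 2) = 1 ∧
        r = Real.sqrt (∑ i, (x ⬝ᵥ (A i).mulVec x) ^ 2)} with hSQ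
  -- SQ ⊆ SB
  have hsub : SQ ⊆ SB := by
    rintro r ⟨x, hx, rfl⟩
    exact ⟨x, x, hx, hx, rfl⟩
  -- SQ nonempty
  have hQne : SQ.Nonempty := by
    refine ⟨_, fun j => if j = ⟨0, hn⟩ then (1:ℝ) else 0, ?_, rfl⟩
    simp [apply_ite (·^2 : ℝ → ℝ)]
  have hBne : SB.Nonempty := hQne.mono hsub
  -- SB bounded above
  have hBbdd : BddAbove SB := by
    refine ⟨Real.sqrt (∑ i, (∑ j, ∑ k, |A i j k|) ^ 2), ?_⟩
    rintro r ⟨x₁, x₂, hx₁, hx₂, rfl⟩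
    apply Real.sqrt_le_sqrt
    refine Finset.sum_le_sum fun i _ => ?_
    have := bilin_bound (A i) x₁ x₂ hx₁ hx₂
    have h0 : (0:ℝ) ≤ ∑ j, ∑ k, |A i j k| :=
      Finset.sum_nonneg fun j _ => Finset.sum_nonneg fun k _ => abs_nonneg _
    nlinarith [sq_abs (x₁ ⬝ᵥ (A i).mulVec x₂), abs_nonneg (x₁ ⬝ᵥ (A i).mulVec x₂)]
  have hQbdd : BddAbove SQ := hBbdd.mono hsub
  set M := sSup SQ with hM
  -- M is nonneg
  have hM0 : 0 ≤ M := by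
    obtain ⟨r, hr⟩ := hQne
    obtain ⟨x, hx, rfl⟩ := hr
    exact le_trans (Real.sqrt_nonneg _) (le_csSup hQbdd ⟨x, hx, rfl⟩)
  -- key bound: |q_c(w)| ≤ (∑ w²) * M for unit c
  have key : ∀ (c : Fin m → ℝ), (∑ i, c i ^ 2) = 1 → ∀ w : Fin n → ℝ,
      |∑ i, c i * (w ⬝ᵥ (A i).mulVec w)| ≤ (∑ j, w j ^ 2) * M := by
    intro c hc w
    by_cases hw : ∑ j, w j ^ 2 = 0
    · have hw0 : w = 0 := by
        funext j
        have := (Finset.sum_eq_zero_iff_of_nonneg (fun i _ => sq_nonneg (w i))).mp hw j (Finset.mem_univ j)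
        exact pow_eq_zero_iff two_ne_zero |>.mp this
      simp [hw0, hw]
    · have hwpos : 0 < ∑ j, w j ^ 2 :=
        lt_of_le_of_ne (Finset.sum_nonneg fun i _ => sq_nonneg _) (Ne.symm hw)
      set t := Real.sqrt (∑ j, w j ^ 2) with ht
      have htpos : 0 < t := Real.sqrt_pos.mpr hwpos
      have ht2 : t ^ 2 = ∑ j, w j ^ 2 := Real.sq_sqrt hwpos.le
      set x : Fin n → ℝ := t⁻¹ • w with hxdef
      have hxunit : ∑ j, x j ^ 2 = 1 := by
        simp only [hxdef, Pi.smul_apply, smul_eq_mul, mul_pow, ← Finset.mul_sum]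
        rw [← ht2]; field_simp
      have hqx : ∀ i, x ⬝ᵥ (A i).mulVec x = t⁻¹ * t⁻¹ * (w ⬝ᵥ (A i).mulVec w) := by
        intro i
        simp only [hxdef]
        rw [smul_dotProduct, Matrix.mulVec_smul, dotProduct_smul]
        simp [smul_eq_mul]; ring
      -- Cauchy-Schwarz
      have hcs : |∑ i, c i * (x ⬝ᵥ (A i).mulVec x)| ≤
          Real.sqrt (∑ i, (x ⬝ᵥ (A i).mulVec x) ^ 2) := by
        rw [← Real.sqrt_sq_eq_abs]
        apply Real.sqrt_le_sqrt
        calc (∑ i, c i * (x ⬝ᵥ (A i).mulVec x)) ^ 2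
            ≤ (∑ i, c i ^ 2) * ∑ i, (x ⬝ᵥ (A i).mulVec x) ^ 2 :=
              Finset.sum_mul_sq_le_sq_mul_sq _ _ _
          _ = _ := by rw [hc, one_mul]
      have hmem : Real.sqrt (∑ i, (x ⬝ᵥ (A i).mulVec x) ^ 2) ≤ M :=
        le_csSup hQbdd ⟨x, hxunit, rfl⟩
      have hexp : ∑ i, c i * (w ⬝ᵥ (A i).mulVec w)
          = t^2 * ∑ i, c i * (x ⬝ᵥ (A i).mulVec x) := by
        rw [Finset.mul_sum]
        refine Finset.sum_congr rfl fun i _ => ?_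
        rw [hqx i]; field_simp
      rw [hexp, abs_mul, abs_of_nonneg (by positivity : (0:ℝ) ≤ t^2), ht2]
      exact mul_le_mul_of_nonneg_left (hcs.trans hmem) hwpos.le
  -- final: sSup SB ≤ M
  have h1 : sSup SB ≤ M := by
    apply csSup_le hBne
    rintro r ⟨x₁, x₂, hx₁, hx₂, rfl⟩
    set T := ∑ i, (x₁ ⬝ᵥ (A i).mulVec x₂) ^ 2 with hT
    by_cases hT0 : T = 0
    · rw [hT0, Real.sqrt_zero]; exact hM0
    · have hTpos : 0 < T := lt_of_le_of_ne (Finset.sum_nonneg fun i _ => sq_nonneg _) (Ne.symm hT0)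
      set S := Real.sqrt T with hS
      have hSpos : 0 < S := Real.sqrt_pos.mpr hTpos
      have hS2 : S ^ 2 = T := Real.sq_sqrt hTpos.le
      set c : Fin m → ℝ := fun i => (x₁ ⬝ᵥ (A i).mulVec x₂) / S with hcdef
      have hcunit : ∑ i, c i ^ 2 = 1 := by
        simp only [hcdef, div_pow, ← Finset.sum_div]
        rw [hS2, ← hT]; field_simp
      have hgval : ∑ i, c i * (x₁ ⬝ᵥ (A i).mulVec x₂) = S := by
        simp only [hcdef, div_mul_eq_mul_div, ← sq, ← Finset.sum_div]
        rw [← hT, ← hS2]; field_simp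
      -- parallelogram
      set u : Fin n → ℝ := x₁ + x₂ with hu
      set v : Fin n → ℝ := x₁ - x₂ with hv
      have hpar : ∑ j, u j ^ 2 + ∑ j, v j ^ 2 = 4 := by
        rw [← Finset.sum_add_distrib]
        have : ∀ j, u j ^ 2 + v j ^ 2 = 2 * x₁ j ^ 2 + 2 * x₂ j ^ 2 := by
          intro j; simp only [hu, hv, Pi.add_apply, Pi.sub_apply]; ring
        rw [Finset.sum_congr rfl fun j _ => this j, Finset.sum_add_distrib,
          ← Finset.mul_sum, ← Finset.mul_sum, hx₁, hx₂]
        ring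
      have hpolar : ∀ i, u ⬝ᵥ (A i).mulVec u - v ⬝ᵥ (A i).mulVec v
          = 4 * (x₁ ⬝ᵥ (A i).mulVec x₂) := by
        intro i
        have hsym := herm_symm (hA i) x₂ x₁
        simp only [hu, hv, add_dotProduct, sub_dotProduct,
          Matrix.mulVec_add, Matrix.mulVec_sub, dotProduct_add, dotProduct_sub]
        rw [← hsym]; ring
      have h4 : 4 * S = (∑ i, c i * (u ⬝ᵥ (A i).mulVec u)) - ∑ i, c i * (v ⬝ᵥ (A i).mulVec v) := by
        rw [← Finset.sum_sub_distrib, ← hgval, Finset.mul_sum]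
        refine Finset.sum_congr rfl fun i _ => ?_
        rw [← mul_sub, hpolar i]; ring
      have hub : 4 * S ≤ 4 * M := by
        rw [h4]
        have h1 := key c hcunit u
        have h2 := key c hcunit v
        have := abs_le.mp h1
        have := abs_le.mp h2
        nlinarith [abs_le.mp h1, abs_le.mp h2, hpar]
      linarith
  -- other direction
  have h2 : M ≤ sSup SB := csSup_le_csSup hBbdd hQne hsub
  linarith
end

section
/- Let λ₁,…,λ_n be real numbers, α₁,…,α_n nonzero reals, and define F(λ) = λ − Σ_k αₖ²/(λₖ − λ) for λ not equal to any λₖ. If λ̃₁ > λ̃₂ are two critical points of F (i.e. F′(λ̃₁) = F′(λ̃₂) = 0, with F′(λ) = 1 − Σ_k αₖ²/(λₖ − λ)²), then F(λ̃₁) > F(λ̃₂). -/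
open BigOperators

/-- If `λ̃₁ > λ̃₂` are critical points of `F(λ) = λ − ∑ₖ αₖ²/(λₖ − λ)` (with all
`αₖ ≠ 0`), then `F(λ̃₁) > F(λ̃₂)`. -/
theorem F_strict_mono_at_critical_points {n : ℕ}
    (lam : Fin n → ℝ) (alpha : Fin n → ℝ) (halpha : ∀ k, alpha k ≠ 0)
    (l1 l2 : ℝ) (hlt : l2 < l1)
    (h1 : ∀ k, l1 ≠ lam k) (h2 : ∀ k, l2 ≠ lam k)
    (hc1 : 1 - ∑ k, alpha k ^ 2 / (lam k - l1) ^ 2 = 0)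
    (hc2 : 1 - ∑ k, alpha k ^ 2 / (lam k - l2) ^ 2 = 0) :
    (l2 - ∑ k, alpha k ^ 2 / (lam k - l2)) <
      (l1 - ∑ k, alpha k ^ 2 / (lam k - l1)) := by
  have hne1 : ∀ k, lam k - l1 ≠ 0 := fun k => sub_ne_zero.mpr fun h => h1 k h.symm
  have hne2 : ∀ k, lam k - l2 ≠ 0 := fun k => sub_ne_zero.mpr fun h => h2 k h.symm
  set S : ℝ := ∑ k, alpha k ^ 2 / ((lam k - l1) * (lam k - l2)) with hS
  set T : ℝ := ∑ k, alpha k ^ 2 * (l1 - l2) ^ 2 / ((lam k - l1) * (lam k - l2)) ^ 2 with hT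
  -- n > 0
  have hn : 0 < n := by
    rcases Nat.eq_zero_or_pos n with h | h
    · subst h; simp at hc1
    · exact h
  have : Nonempty (Fin n) := Fin.pos_iff_nonempty.mp hn
  have hTpos : 0 < T := by
    apply Finset.sum_pos _ Finset.univ_nonempty
    intro k _
    apply div_pos
    · exact mul_pos (pow_two_pos_of_ne_zero (halpha k))
        (pow_two_pos_of_ne_zero (sub_ne_zero.mpr hlt.ne'))
    · exact pow_two_pos_of_ne_zero (mul_ne_zero (hne1 k) (hne2 k))
  have lem2 : T = (∑ k, alpha k ^ 2 / (lam k - l1) ^ 2)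
      + (∑ k, alpha k ^ 2 / (lam k - l2) ^ 2) - 2 * S := by
    rw [hT, hS, Finset.mul_sum, ← Finset.sum_add_distrib, ← Finset.sum_sub_distrib]
    refine Finset.sum_congr rfl fun k _ => ?_
    have ha := hne1 k; have hb := hne2 k
    field_simp
    ring
  have lem1 : (∑ k, alpha k ^ 2 / (lam k - l1)) - (∑ k, alpha k ^ 2 / (lam k - l2))
      = (l1 - l2) * S := by
    rw [hS, Finset.mul_sum, ← Finset.sum_sub_distrib]
    refine Finset.sum_congr rfl fun k _ => ?_
    have ha := hne1 k; have hb := hne2 k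
    field_simp
    ring
  have hSlt : S < 1 := by linarith
  nlinarith [mul_pos (sub_pos.mpr hlt) (sub_pos.mpr hSlt)]
end

section
/- Let A₁,…,A_m be symmetric n×n matrices, v₁,…,v_m ∈ ℝⁿ, and let x ∈ ℝⁿ with |x| = 1 satisfy (c₁·A − λ₁)x = c₁·v and (c₂·A − λ₂)x = c₂·v for non-collinear c₁, c₂ ∈ ℝᵐ with (c₁ − c₂)·v ≠ 0 and with c₁·A − λ₁I positive definite. Then there exist c ∈ ℝᵐ, c ≠ 0, and λ ∈ ℝ such that c·A − λI is positive semidefinite with a zero eigenvalue and (c·A − λ)x = c·v. -/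
open Matrix BigOperators

private lemma quad_continuous {n : ℕ} (B : Matrix (Fin n) (Fin n) ℝ) :
    Continuous fun u : Fin n → ℝ => u ⬝ᵥ B *ᵥ u := by
  have h : (fun u : Fin n → ℝ => u ⬝ᵥ B *ᵥ u)
      = fun u => ∑ i, u i * ∑ j, B i j * u j := by
    funext u; simp [dotProduct, mulVec]
  rw [h]
  exact continuous_finset_sum _ fun i _ =>
    (continuous_apply i).mul (continuous_finset_sum _ fun j _ =>
      continuous_const.mul (continuous_apply j))

private lemma herm_comb {m n : ℕ} (A : Fin m → Matrix (Fin n) (Fin n) ℝ)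
    (hA : ∀ i, (A i).IsHermitian) (c : Fin m → ℝ) (lam : ℝ) :
    ((∑ i, c i • A i) - lam • (1 : Matrix (Fin n) (Fin n) ℝ)).IsHermitian := by
  unfold Matrix.IsHermitian
  rw [conjTranspose_sub, conjTranspose_sum, conjTranspose_smul, conjTranspose_one]
  congr 1
  exact Finset.sum_congr rfl fun i _ => by rw [conjTranspose_smul, hA i, star_trivial]

private lemma dot_symm {n : ℕ} {B : Matrix (Fin n) (Fin n) ℝ} (hB : B.IsHermitian)
    (u w : Fin n → ℝ) : u ⬝ᵥ B *ᵥ w = w ⬝ᵥ B *ᵥ u := by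
  simp only [dotProduct, mulVec, Finset.mul_sum]
  rw [Finset.sum_comm]
  refine Finset.sum_congr rfl fun i _ => Finset.sum_congr rfl fun j _ => ?_
  have h : B i j = B j i := by
    have := congrFun (congrFun hB j) i
    simpa [Matrix.conjTranspose_apply] using this
  rw [h]; ring

private lemma quad_scale {n : ℕ} (B : Matrix (Fin n) (Fin n) ℝ) (u : Fin n → ℝ) (t : ℝ) :
    (t • u) ⬝ᵥ B *ᵥ (t • u) = t ^ 2 * (u ⬝ᵥ B *ᵥ u) := by
  rw [Matrix.mulVec_smul, smul_dotProduct, dotProduct_smul]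
  simp [smul_eq_mul]; ring

private lemma sum_sq_pos' {n : ℕ} {u : Fin n → ℝ} (hu : u ≠ 0) : 0 < ∑ i, u i ^ 2 := by
  obtain ⟨i, hi⟩ := Function.ne_iff.mp hu
  refine Finset.sum_pos' (fun j _ => sq_nonneg _) ⟨i, Finset.mem_univ i, ?_⟩
  exact lt_of_le_of_ne (sq_nonneg _) (Ne.symm (pow_ne_zero 2 hi))

private lemma exists_unit' {n : ℕ} {u : Fin n → ℝ} (hu : u ≠ 0) :
    ∃ (w : Fin n → ℝ) (s : ℝ), (∑ i, w i ^ 2) = 1 ∧ 0 < s ∧ u = s • w := by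
  have hs := sum_sq_pos' hu
  set r := Real.sqrt (∑ i, u i ^ 2) with hr'
  have hr : 0 < r := Real.sqrt_pos.mpr hs
  refine ⟨r⁻¹ • u, r, ?_, hr, ?_⟩
  · have h : ∑ i, (r⁻¹ • u) i ^ 2 = (r⁻¹) ^ 2 * ∑ i, u i ^ 2 := by
      simp only [Pi.smul_apply, smul_eq_mul, mul_pow, Finset.mul_sum]
    rw [h, inv_pow, hr', Real.sq_sqrt hs.le, inv_mul_cancel₀ hs.ne']
  · rw [smul_smul, mul_inv_cancel₀ hr.ne', one_smul]

/-- Lemma 1 of the paper: if a unit vector `x` solves `(cᵢ·A − λᵢ)x = cᵢ·v` for two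
non-collinear `c₁, c₂` with `(c₁ − c₂)·v ≠ 0` and `c₁·A − λ₁·I` positive definite,
then there are `c ≠ 0` and `λ` with `c·A − λ·I` positive semidefinite, possessing a
zero eigenvalue, and `(c·A − λ)x = c·v`. -/
theorem lemma_one {m n : ℕ}
    (A : Fin m → Matrix (Fin n) (Fin n) ℝ) (hA : ∀ i, (A i).IsHermitian)
    (v : Fin m → (Fin n → ℝ)) (x : Fin n → ℝ) (hx : (∑ i, x i ^ 2) = 1)
    (c₁ c₂ : Fin m → ℝ) (lam₁ lam₂ : ℝ)
    (hnc : ∀ t : ℝ, c₁ ≠ t • c₂ ∧ c₂ ≠ t • c₁)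
    (hv : (∑ i, (c₁ i - c₂ i) • v i) ≠ 0)
    (heq1 : ((∑ i, c₁ i • A i) - lam₁ • (1 : Matrix (Fin n) (Fin n) ℝ)).mulVec x
              = ∑ i, c₁ i • v i)
    (heq2 : ((∑ i, c₂ i • A i) - lam₂ • (1 : Matrix (Fin n) (Fin n) ℝ)).mulVec x
              = ∑ i, c₂ i • v i)
    (hpd : ((∑ i, c₁ i • A i) - lam₁ • (1 : Matrix (Fin n) (Fin n) ℝ)).PosDef) :
    ∃ (c : Fin m → ℝ) (lam : ℝ), c ≠ 0 ∧
      ((∑ i, c i • A i) - lam • (1 : Matrix (Fin n) (Fin n) ℝ)).PosSemidef ∧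
      (∃ u : Fin n → ℝ, u ≠ 0 ∧
        ((∑ i, c i • A i) - lam • (1 : Matrix (Fin n) (Fin n) ℝ)).mulVec u = 0) ∧
      ((∑ i, c i • A i) - lam • (1 : Matrix (Fin n) (Fin n) ℝ)).mulVec x
        = ∑ i, c i • v i := by
  classical
  set P := (∑ i, c₁ i • A i) - lam₁ • (1 : Matrix (Fin n) (Fin n) ℝ) with hPdef
  set N := (∑ i, c₂ i • A i) - lam₂ • (1 : Matrix (Fin n) (Fin n) ℝ) with hNdef
  set D := P - N with hDdef
  have hPh : P.IsHermitian := herm_comb A hA c₁ lam₁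
  have hNh : N.IsHermitian := herm_comb A hA c₂ lam₂
  have hDh : D.IsHermitian := hPh.sub hNh
  set y := ∑ i, (c₁ i - c₂ i) • v i with hydef
  have hDx : D *ᵥ x = y := by
    rw [hDdef, Matrix.sub_mulVec, heq1, heq2, hydef, ← Finset.sum_sub_distrib]
    exact Finset.sum_congr rfl fun i _ => (sub_smul _ _ _).symm
  -- a vector on which the quadratic form of D does not vanish
  have hexu : ∃ u : Fin n → ℝ, u ⬝ᵥ D *ᵥ u ≠ 0 := by
    by_contra hcon
    push_neg at hcon
    have hxy : x ⬝ᵥ D *ᵥ y = y ⬝ᵥ y := by rw [dot_symm hDh, hDx]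
    have h2 := hcon (x + y)
    rw [Matrix.mulVec_add, dotProduct_add, add_dotProduct, add_dotProduct,
      hcon x, hcon y, hxy, hDx] at h2
    have hyy : y ⬝ᵥ y = 0 := by linarith
    exact hv (dotProduct_self_eq_zero.mp hyy)
  obtain ⟨u1, hu1⟩ := hexu
  have hu1ne : u1 ≠ 0 := by rintro rfl; simp at hu1
  obtain ⟨w, s, hwS', hspos, hu1w⟩ := exists_unit' hu1ne
  have hw : w ⬝ᵥ D *ᵥ w ≠ 0 := by
    intro h
    rw [hu1w, quad_scale, h, mul_zero] at hu1
    exact hu1 rfl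
  -- the unit sphere
  set S : Set (Fin n → ℝ) := {u | ∑ i, u i ^ 2 = 1} with hSdef
  have hSne : S.Nonempty := ⟨x, hx⟩
  have hwS : w ∈ S := hwS'
  have habs : ∀ u ∈ S, ∀ i, |u i| ≤ 1 := by
    intro u huS i
    rw [← sq_le_one_iff_abs_le_one]
    calc u i ^ 2 ≤ ∑ j, u j ^ 2 :=
          Finset.single_le_sum (fun j _ => sq_nonneg (u j)) (Finset.mem_univ i)
      _ = 1 := huS
  have hScomp : IsCompact S := by
    apply Metric.isCompact_of_isClosed_isBounded
    · exact isClosed_eq (continuous_finset_sum _ fun i _ => (continuous_apply i).pow 2)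
        continuous_const
    · apply Bornology.IsBounded.subset (Metric.isBounded_closedBall (x := (0 : Fin n → ℝ)) (r := 1))
      intro u huS
      rw [Metric.mem_closedBall, dist_zero_right, pi_norm_le_iff_of_nonneg zero_le_one]
      intro i; rw [Real.norm_eq_abs]; exact habs u huS i
  -- the family of quadratic forms and its minimum on the sphere
  set Q : ℝ → (Fin n → ℝ) → ℝ := fun μ u => u ⬝ᵥ (P + μ • D) *ᵥ u with hQdef
  have hQdec : ∀ (μ : ℝ) (u : Fin n → ℝ),
      Q μ u = u ⬝ᵥ P *ᵥ u + μ * (u ⬝ᵥ D *ᵥ u) := by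
    intro μ u
    simp only [hQdef, Matrix.add_mulVec, dotProduct_add, Matrix.smul_mulVec,
      dotProduct_smul, smul_eq_mul]
  have hQcont : ∀ μ : ℝ, Continuous (Q μ) := fun μ => quad_continuous _
  set f : ℝ → ℝ := fun μ => sInf (Q μ '' S) with hfdef
  have hmin : ∀ μ : ℝ, ∃ u₀ ∈ S, f μ = Q μ u₀ ∧ ∀ u ∈ S, Q μ u₀ ≤ Q μ u := by
    intro μ
    obtain ⟨u₀, hu₀S, hu₀min⟩ := hScomp.exists_isMinOn hSne ((hQcont μ).continuousOn)
    have hm : ∀ u ∈ S, Q μ u₀ ≤ Q μ u := fun u hu' => hu₀min hu'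
    refine ⟨u₀, hu₀S, le_antisymm ?_ ?_, hm⟩
    · exact csInf_le ⟨Q μ u₀, by rintro b ⟨u, huS, rfl⟩; exact hm u huS⟩ ⟨u₀, hu₀S, rfl⟩
    · exact le_csInf (hSne.image _) (by rintro b ⟨u, huS, rfl⟩; exact hm u huS)
  have hbdd : ∀ μ : ℝ, BddBelow (Q μ '' S) := by
    intro μ; obtain ⟨u₀, _, _, hm⟩ := hmin μ
    exact ⟨Q μ u₀, by rintro b ⟨u, huS, rfl⟩; exact hm u huS⟩
  -- Lipschitz continuity of f
  set C := ∑ i, ∑ j, |D i j| with hCdef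
  have hC0 : 0 ≤ C := Finset.sum_nonneg fun i _ => Finset.sum_nonneg fun j _ => abs_nonneg _
  have hCb : ∀ u ∈ S, |u ⬝ᵥ D *ᵥ u| ≤ C := by
    intro u huS
    have h1 : u ⬝ᵥ D *ᵥ u = ∑ i, ∑ j, u i * (D i j * u j) := by
      simp [dotProduct, mulVec, Finset.mul_sum]
    rw [h1]
    calc |∑ i, ∑ j, u i * (D i j * u j)| ≤ ∑ i, |∑ j, u i * (D i j * u j)| :=
          Finset.abs_sum_le_sum_abs _ _
      _ ≤ ∑ i, ∑ j, |u i * (D i j * u j)| :=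
          Finset.sum_le_sum fun i _ => Finset.abs_sum_le_sum_abs _ _
      _ ≤ C := by
          rw [hCdef]
          refine Finset.sum_le_sum fun i _ => Finset.sum_le_sum fun j _ => ?_
          rw [abs_mul, abs_mul]
          calc |u i| * (|D i j| * |u j|) ≤ 1 * (|D i j| * 1) := by
                apply mul_le_mul (habs u huS i) ?_ (by positivity) zero_le_one
                exact mul_le_mul_of_nonneg_left (habs u huS j) (abs_nonneg _)
            _ = |D i j| := by ring
  have hfle : ∀ μ ν : ℝ, f μ ≤ f ν + C * |μ - ν| := by
    intro μ ν
    obtain ⟨u₀, hu₀S, hval, _⟩ := hmin ν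
    have h1 : f μ ≤ Q μ u₀ := csInf_le (hbdd μ) ⟨u₀, hu₀S, rfl⟩
    have h2 : Q μ u₀ = Q ν u₀ + (μ - ν) * (u₀ ⬝ᵥ D *ᵥ u₀) := by rw [hQdec, hQdec]; ring
    have h3 : (μ - ν) * (u₀ ⬝ᵥ D *ᵥ u₀) ≤ C * |μ - ν| := by
      calc (μ - ν) * (u₀ ⬝ᵥ D *ᵥ u₀) ≤ |(μ - ν) * (u₀ ⬝ᵥ D *ᵥ u₀)| := le_abs_self _
        _ = |μ - ν| * |u₀ ⬝ᵥ D *ᵥ u₀| := abs_mul _ _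
        _ ≤ |μ - ν| * C := mul_le_mul_of_nonneg_left (hCb u₀ hu₀S) (abs_nonneg _)
        _ = C * |μ - ν| := mul_comm _ _
    have h4 := h1.trans_eq h2
    rw [hval]; linarith
  have hcont : Continuous f := by
    refine LipschitzWith.continuous (K := Real.toNNReal C) (LipschitzWith.of_dist_le_mul ?_)
    intro μ ν
    rw [Real.dist_eq, Real.dist_eq, Real.coe_toNNReal C hC0]
    have h1 := hfle μ ν
    have h2 := hfle ν μ
    rw [abs_sub_comm ν μ] at h2
    rw [abs_sub_le_iff]
    constructor <;> linarith
  -- f is negative somewhere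
  set μ₀ := -((w ⬝ᵥ P *ᵥ w) + 1) / (w ⬝ᵥ D *ᵥ w) with hμ₀
  have hQw : Q μ₀ w = -1 := by
    rw [hQdec, hμ₀]; field_simp; ring
  have hfneg : f μ₀ ≤ -1 := by
    have h := csInf_le (hbdd μ₀) ⟨w, hwS, rfl⟩
    rw [hQw] at h
    exact h
  -- f is positive at 0
  have hf0 : 0 < f 0 := by
    obtain ⟨u₀, hu₀S, hval0, _⟩ := hmin 0
    have hu₀ne : u₀ ≠ 0 := by
      intro h; rw [hSdef] at hu₀S; simp [h] at hu₀S
    have hps := hpd.dotProduct_mulVec_pos hu₀ne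
    have hst : star u₀ = u₀ := by simp
    rw [hst] at hps
    have hQ0 : Q 0 u₀ = u₀ ⬝ᵥ P *ᵥ u₀ := by rw [hQdec]; ring
    rw [hval0, hQ0]; exact hps
  -- intermediate value theorem
  have hmem : (0 : ℝ) ∈ Set.uIcc (f 0) (f μ₀) := by
    rw [Set.mem_uIcc]; right; constructor <;> linarith
  obtain ⟨μs, _, hfμs⟩ := intermediate_value_uIcc hcont.continuousOn hmem
  -- the resulting matrix
  obtain ⟨us, husS, hvs, hms⟩ := hmin μs
  have husne : us ≠ 0 := by
    intro h; rw [hSdef] at husS; simp [h] at husS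
  have hQus : Q μs us = 0 := by rw [← hvs, hfμs]
  have hpsd : (P + μs • D).PosSemidef := by
    refine Matrix.PosSemidef.of_dotProduct_mulVec_nonneg ?_ ?_
    · unfold Matrix.IsHermitian
      rw [conjTranspose_add, conjTranspose_smul, hPh, hDh, star_trivial]
    · intro u
      have hst : star u = u := by simp
      rw [hst]
      by_cases hu0 : u = 0
      · simp [hu0]
      · obtain ⟨w', s', hw'S, hs'pos, rfl⟩ := exists_unit' hu0
        have h1 : 0 ≤ Q μs w' := by
          have := hms w' hw'S
          rw [hQus] at this
          exact this
        have h2 : (s' • w') ⬝ᵥ (P + μs • D) *ᵥ (s' • w') = s' ^ 2 * Q μs w' :=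
          quad_scale _ _ _
        rw [h2]
        positivity
  have hMus : (P + μs • D) *ᵥ us = 0 := by
    have h := (hpsd.dotProduct_mulVec_zero_iff us).mp
    have hst : star us = us := by simp
    rw [hst] at h
    exact h hQus
  -- the candidate c and lam
  set c3 : Fin m → ℝ := fun i => c₁ i + μs * (c₁ i - c₂ i) with hc3
  set lam3 : ℝ := lam₁ + μs * (lam₁ - lam₂) with hlam3
  have hMid : (∑ i, c3 i • A i) - lam3 • (1 : Matrix (Fin n) (Fin n) ℝ) = P + μs • D := by
    rw [hlam3, hDdef, hPdef, hNdef]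
    rw [show (∑ i, c3 i • A i)
        = (∑ i, c₁ i • A i) + μs • ((∑ i, c₁ i • A i) - (∑ i, c₂ i • A i)) by
      rw [← Finset.sum_sub_distrib, Finset.smul_sum, ← Finset.sum_add_distrib]
      exact Finset.sum_congr rfl fun i _ => by rw [hc3]; module]
    module
  have hvid : (∑ i, c3 i • v i) = (∑ i, c₁ i • v i) + μs • y := by
    rw [hydef, Finset.smul_sum, ← Finset.sum_add_distrib]
    exact Finset.sum_congr rfl fun i _ => by rw [hc3]; module
  refine ⟨c3, lam3, ?_, ?_, ⟨us, husne, ?_⟩, ?_⟩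
  · -- c3 ≠ 0
    intro hc0
    by_cases hμ : μs = 0
    · have hc1 : c₁ = (0 : ℝ) • c₂ := by
        funext i
        have h := congrFun hc0 i
        rw [hc3] at h
        simp only [Pi.zero_apply] at h
        simp [hμ] at h
        simpa using h
      exact (hnc 0).1 hc1
    · have hc2 : c₂ = ((1 + μs) / μs) • c₁ := by
        funext i
        have h := congrFun hc0 i
        rw [hc3] at h
        simp only [Pi.zero_apply, Pi.smul_apply, smul_eq_mul] at h ⊢
        field_simp
        linarith [h]
      exact (hnc _).2 hc2
  · rw [hMid]; exact hpsd
  · rw [hMid]; exact hMus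
  · rw [hMid, Matrix.add_mulVec, Matrix.smul_mulVec, heq1, hDx, hvid]
end

section
/- Let A be a symmetric n×n matrix, λ < λ_min(A), and v ∈ ℝⁿ. If x solves (A − λ)x = v and |x| = 1, then c·y is uniquely minimized at x over the unit sphere, where y(z) = zᵀAz − 2vᵀz; that is, for any unit vector z ≠ x, zᵀAz − 2vᵀz > xᵀAx − 2vᵀx. -/
open Matrix BigOperators

lemma quad_pos_aux {n : ℕ} (hn : 0 < n)
    (A : Matrix (Fin n) (Fin n) ℝ) (hA : A.IsHermitian)
    (lam : ℝ) (hlam : lam < ⨅ i, hA.eigenvalues i)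
    (w : Fin n → ℝ) (hw : w ≠ 0) :
    0 < w ⬝ᵥ (A - lam • (1 : Matrix (Fin n) (Fin n) ℝ)).mulVec w := by
  have hne : Nonempty (Fin n) := ⟨⟨0, hn⟩⟩
  have hpos : ∀ i, 0 < hA.eigenvalues i - lam := by
    intro i
    have h1 : (⨅ i, hA.eigenvalues i) ≤ hA.eigenvalues i :=
      ciInf_le (Finite.bddBelow_range _) i
    linarith
  set U : Matrix (Fin n) (Fin n) ℝ := (hA.eigenvectorUnitary : Matrix (Fin n) (Fin n) ℝ) with hU
  have h1 : U * star U = 1 := (Matrix.mem_unitaryGroup_iff).mp hA.eigenvectorUnitary.2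
  have h2 : star U * U = 1 := (Matrix.mem_unitaryGroup_iff').mp hA.eigenvectorUnitary.2
  have hd : diagonal (RCLike.ofReal ∘ hA.eigenvalues) - lam • (1 : Matrix (Fin n) (Fin n) ℝ)
      = diagonal (fun i => hA.eigenvalues i - lam) := by
    ext i j
    by_cases h : i = j <;> simp [diagonal, h, Matrix.one_apply]
  have hspec : A - lam • (1 : Matrix (Fin n) (Fin n) ℝ)
      = U * diagonal (fun i => hA.eigenvalues i - lam) * star U := by
    rw [← hd, Matrix.mul_sub, Matrix.sub_mul, Matrix.mul_smul, Matrix.smul_mul, Matrix.mul_one, h1]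
    exact congrArg (· - lam • (1 : Matrix (Fin n) (Fin n) ℝ)) hA.spectral_theorem
  rw [hspec]
  set y : Fin n → ℝ := (star U).mulVec w with hy
  have hvm : w ᵥ* U = y := by
    ext i
    simp [hy, vecMul, mulVec, dotProduct, mul_comm, Matrix.star_apply]
  have hval : w ⬝ᵥ (U * diagonal (fun i => hA.eigenvalues i - lam) * star U).mulVec w
      = ∑ i, (hA.eigenvalues i - lam) * (y i)^2 := by
    rw [← mulVec_mulVec, ← mulVec_mulVec, dotProduct_mulVec, hvm, ← hy]
    simp only [mulVec_diagonal, dotProduct]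
    exact Finset.sum_congr rfl fun i _ => by ring
  rw [hval]
  have hyne : y ≠ 0 := by
    intro h0
    apply hw
    have : U.mulVec y = U.mulVec 0 := by rw [h0]
    rw [hy, mulVec_mulVec, h1] at this
    simpa using this
  obtain ⟨j, hj⟩ := Function.ne_iff.mp hyne
  have : 0 < (hA.eigenvalues j - lam) * (y j)^2 := by
    exact mul_pos (hpos j) ((sq_nonneg _).lt_of_ne (Ne.symm (pow_ne_zero 2 hj)))
  refine lt_of_lt_of_le this ?_
  apply Finset.single_le_sum (f := fun i => (hA.eigenvalues i - lam) * (y i)^2) ?_ (Finset.mem_univ j)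
  intro i _
  have := hpos i
  positivity

/-- If `λ < λ_min(A)` and the unit vector `x` solves `(A − λ)x = v`, then `x` is the
unique minimizer of `zᵀAz − 2vᵀz` over the unit sphere. -/
theorem unique_min_below_spectrum {n : ℕ} (hn : 0 < n)
    (A : Matrix (Fin n) (Fin n) ℝ) (hA : A.IsHermitian)
    (lam : ℝ) (hlam : lam < ⨅ i, hA.eigenvalues i)
    (v x : Fin n → ℝ) (hx : (∑ i, x i ^ 2) = 1)
    (heq : (A - lam • (1 : Matrix (Fin n) (Fin n) ℝ)).mulVec x = v) :
    ∀ z : Fin n → ℝ, (∑ i, z i ^ 2) = 1 → z ≠ x →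
      x ⬝ᵥ A.mulVec x - 2 * (v ⬝ᵥ x) < z ⬝ᵥ A.mulVec z - 2 * (v ⬝ᵥ z) := by
  intro z hz hzx
  have hw : z - x ≠ 0 := sub_ne_zero.mpr hzx
  have hkey := quad_pos_aux hn A hA lam hlam (z - x) hw
  have hAT : Aᵀ = A := by
    have := hA
    unfold Matrix.IsHermitian at this
    ext i j
    have h := congrFun (congrFun this i) j
    simpa [Matrix.conjTranspose_apply] using h
  have hsymm : x ⬝ᵥ A.mulVec z = z ⬝ᵥ A.mulVec x := by
    rw [dotProduct_mulVec, ← Matrix.mulVec_transpose, hAT, dotProduct_comm]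
  have hzz : z ⬝ᵥ z = 1 := by
    rw [← hz]; simp [dotProduct, sq]
  have hxx : x ⬝ᵥ x = 1 := by
    rw [← hx]; simp [dotProduct, sq]
  have hv : v = A.mulVec x - lam • x := by
    rw [← heq, Matrix.sub_mulVec, Matrix.smul_mulVec, Matrix.one_mulVec]
  have hexp : (z - x) ⬝ᵥ (A - lam • (1 : Matrix (Fin n) (Fin n) ℝ)).mulVec (z - x)
      = (z ⬝ᵥ A.mulVec z - 2 * (v ⬝ᵥ z)) - (x ⬝ᵥ A.mulVec x - 2 * (v ⬝ᵥ x)) := by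
    rw [hv]
    rw [Matrix.sub_mulVec, Matrix.smul_mulVec, Matrix.one_mulVec, Matrix.mulVec_sub]
    simp only [dotProduct_sub, sub_dotProduct, dotProduct_smul, smul_dotProduct, smul_eq_mul]
    rw [dotProduct_comm (A.mulVec x) z, dotProduct_comm (A.mulVec x) x]
    linear_combination -hsymm + lam * (dotProduct_comm z x) - lam * hzz + lam * hxx
  linarith [hexp ▸ hkey]
end

section
/- Let A₁,…,A_m be symmetric n×n matrices, v₁,…,v_m ∈ ℝⁿ, and suppose that for every unit c ∈ ℝᵐ the matrix c·A − λ_min(c·A)·I together with w(c) = lim_{ε→0⁺}(c·A − λ_min(c·A) + ε)⁻¹(c·v) satisfies |w(c)| > 1 (in particular c·v is orthogonal to the λ_min(c·A)-eigenspace). Then for each unit c ∈ ℝᵐ there is a unique unit vector x minimizing c·f(x) = Σᵢ cᵢ(xᵀAᵢx − 2vᵢᵀx) over the sphere |x| = 1, and the associated multiplier λ satisfies λ < λ_min(c·A). -/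
open Matrix BigOperators Filter Topology

section Helpers

lemma tmv_sum_sq_eq_dot {n : ℕ} (x : Fin n → ℝ) : (∑ i, x i ^ 2) = x ⬝ᵥ x := by
  simp [dotProduct, sq]

lemma tmv_quad_lb {n : ℕ} {B : Matrix (Fin n) (Fin n) ℝ} (hB : B.IsHermitian) (x : Fin n → ℝ) :
    (⨅ j, hB.eigenvalues j) * (x ⬝ᵥ x) ≤ x ⬝ᵥ B *ᵥ x := by
  rcases Nat.eq_zero_or_pos n with h0 | hn
  · subst h0; simp [dotProduct]
  have := Fin.pos_iff_nonempty.mp hn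
  set U : Matrix (Fin n) (Fin n) ℝ := (hB.eigenvectorUnitary : Matrix (Fin n) (Fin n) ℝ) with hUdef
  have hstar : star U = Uᵀ := conjTranspose_eq_transpose_of_trivial U
  have hsp : B = U * diagonal hB.eigenvalues * Uᵀ := by
    have h := hB.spectral_theorem
    have h2 : (diagonal (RCLike.ofReal ∘ hB.eigenvalues) : Matrix (Fin n) (Fin n) ℝ)
        = diagonal hB.eigenvalues := by congr 1
    rw [h2] at h
    refine h.trans ?_
    rw [Unitary.conjStarAlgAut_apply, hstar]
  have hU : U * Uᵀ = 1 := by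
    have := mem_unitaryGroup_iff.mp hB.eigenvectorUnitary.2
    rw [← hstar]; exact this
  set y : Fin n → ℝ := x ᵥ* U with hy
  have hyy : y ⬝ᵥ y = x ⬝ᵥ x := by
    rw [hy]
    rw [show (x ᵥ* U) ⬝ᵥ (x ᵥ* U) = (x ᵥ* U) ⬝ᵥ (Uᵀ *ᵥ x) by rw [mulVec_transpose]]
    rw [dotProduct_mulVec, vecMul_vecMul, hU, vecMul_one]
  have hxBx : x ⬝ᵥ B *ᵥ x = y ⬝ᵥ (diagonal hB.eigenvalues) *ᵥ y := by
    conv_lhs => rw [hsp]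
    rw [← mulVec_mulVec, ← mulVec_mulVec, dotProduct_mulVec, hy, mulVec_transpose]
  rw [hxBx, ← hyy, dotProduct, dotProduct, Finset.mul_sum]
  apply Finset.sum_le_sum
  intro j _
  rw [mulVec_diagonal]
  have h1 : (⨅ j, hB.eigenvalues j) ≤ hB.eigenvalues j := ciInf_le (Finite.bddBelow_range _) j
  nlinarith [mul_self_nonneg (y j)]

lemma tmv_herm_shift {n : ℕ} {B : Matrix (Fin n) (Fin n) ℝ} (hB : B.IsHermitian) (lam : ℝ) :
    (B - lam • (1 : Matrix (Fin n) (Fin n) ℝ)).IsHermitian := by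
  simp only [Matrix.IsHermitian, conjTranspose_sub, conjTranspose_smul, hB.eq,
    conjTranspose_one, star_trivial]

lemma tmv_dot_shift {n : ℕ} (B : Matrix (Fin n) (Fin n) ℝ) (lam : ℝ) (x y : Fin n → ℝ) :
    x ⬝ᵥ (B - lam • (1 : Matrix (Fin n) (Fin n) ℝ)) *ᵥ y
      = x ⬝ᵥ B *ᵥ y - lam * (x ⬝ᵥ y) := by
  rw [sub_mulVec, dotProduct_sub, smul_mulVec, one_mulVec, dotProduct_smul]
  simp

lemma tmv_posdef_shift {n : ℕ} {B : Matrix (Fin n) (Fin n) ℝ} (hB : B.IsHermitian) {lam : ℝ}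
    (hlam : lam < ⨅ j, hB.eigenvalues j) :
    (B - lam • (1 : Matrix (Fin n) (Fin n) ℝ)).PosDef := by
  refine posDef_iff_dotProduct_mulVec.mpr ⟨tmv_herm_shift hB lam, fun x hx => ?_⟩
  rw [star_trivial, tmv_dot_shift]
  have h1 := tmv_quad_lb hB x
  have h2 : 0 < x ⬝ᵥ x := by
    have hnn : (0:ℝ) ≤ x ⬝ᵥ x := Finset.sum_nonneg fun i _ => mul_self_nonneg _
    rcases lt_or_eq_of_le hnn with h | h
    · exact h
    · exact absurd (dotProduct_self_eq_zero.mp h.symm) hx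
  nlinarith

lemma tmv_dot_symm {n : ℕ} {M : Matrix (Fin n) (Fin n) ℝ} (hM : M.IsHermitian) (x z : Fin n → ℝ) :
    x ⬝ᵥ M *ᵥ z = z ⬝ᵥ M *ᵥ x := by
  have ht : Mᵀ = M := (conjTranspose_eq_transpose_of_trivial M).symm.trans hM.eq
  rw [dotProduct_mulVec, ← mulVec_transpose, ht, dotProduct_comm]

lemma tmv_key_identity {n : ℕ} {B : Matrix (Fin n) (Fin n) ℝ} (hB : B.IsHermitian)
    {lam : ℝ} {b x z : Fin n → ℝ}
    (hx : (B - lam • (1 : Matrix (Fin n) (Fin n) ℝ)) *ᵥ x = b)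
    (hxu : x ⬝ᵥ x = 1) (hzu : z ⬝ᵥ z = 1) :
    (z ⬝ᵥ B *ᵥ z - 2 * (b ⬝ᵥ z)) - (x ⬝ᵥ B *ᵥ x - 2 * (b ⬝ᵥ x))
      = (z - x) ⬝ᵥ (B - lam • (1 : Matrix (Fin n) (Fin n) ℝ)) *ᵥ (z - x) := by
  set M := B - lam • (1 : Matrix (Fin n) (Fin n) ℝ) with hMdef
  have hMh : M.IsHermitian := tmv_herm_shift hB lam
  have e1 : (z - x) ⬝ᵥ M *ᵥ (z - x)
      = z ⬝ᵥ M *ᵥ z - z ⬝ᵥ M *ᵥ x - (x ⬝ᵥ M *ᵥ z - x ⬝ᵥ M *ᵥ x) := by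
    rw [mulVec_sub, sub_dotProduct, dotProduct_sub, dotProduct_sub]
  have e2 : x ⬝ᵥ M *ᵥ z = z ⬝ᵥ M *ᵥ x := tmv_dot_symm hMh x z
  have e3 : z ⬝ᵥ M *ᵥ x = z ⬝ᵥ b := by rw [hx]
  have e4 : x ⬝ᵥ M *ᵥ x = x ⬝ᵥ b := by rw [hx]
  have e5 : z ⬝ᵥ M *ᵥ z = z ⬝ᵥ B *ᵥ z - lam * (z ⬝ᵥ z) := tmv_dot_shift B lam z z
  have e6 : x ⬝ᵥ M *ᵥ x = x ⬝ᵥ B *ᵥ x - lam * (x ⬝ᵥ x) := tmv_dot_shift B lam x x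
  have e7 : b ⬝ᵥ z = z ⬝ᵥ b := dotProduct_comm b z
  have e8 : b ⬝ᵥ x = x ⬝ᵥ b := dotProduct_comm b x
  rw [e1, e2, e3, e7, e8, e5]
  rw [e4] at e6
  rw [hxu, hzu] at *
  linarith

lemma tmv_sum_mulVec {m n : ℕ} (f : Fin m → Matrix (Fin n) (Fin n) ℝ) (x : Fin n → ℝ) :
    (∑ i, f i) *ᵥ x = ∑ i, f i *ᵥ x := by
  ext j
  simp only [mulVec, dotProduct, Matrix.sum_apply, Finset.sum_apply, Finset.sum_mul]
  rw [Finset.sum_comm]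

lemma tmv_dotProduct_sum {m n : ℕ} (x : Fin n → ℝ) (w : Fin m → (Fin n → ℝ)) :
    x ⬝ᵥ (∑ i, w i) = ∑ i, x ⬝ᵥ w i := by
  simp only [dotProduct, Finset.sum_apply, Finset.mul_sum]
  rw [Finset.sum_comm]

lemma tmv_sum_dotProduct {m n : ℕ} (x : Fin n → ℝ) (w : Fin m → (Fin n → ℝ)) :
    (∑ i, w i) ⬝ᵥ x = ∑ i, w i ⬝ᵥ x := by
  simp only [dotProduct, Finset.sum_apply, Finset.sum_mul]
  rw [Finset.sum_comm]

lemma tmv_cf_eq {m n : ℕ} (A : Fin m → Matrix (Fin n) (Fin n) ℝ) (v : Fin m → (Fin n → ℝ))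
    (c : Fin m → ℝ) (x : Fin n → ℝ) :
    (∑ i, c i * (x ⬝ᵥ (A i).mulVec x - 2 * (v i ⬝ᵥ x)))
      = x ⬝ᵥ (∑ i, c i • A i) *ᵥ x - 2 * ((∑ i, c i • v i) ⬝ᵥ x) := by
  have h1 : (∑ i, c i • A i) *ᵥ x = ∑ i, c i • ((A i) *ᵥ x) := by
    rw [tmv_sum_mulVec]
    exact Finset.sum_congr rfl fun i _ => smul_mulVec _ _ _
  rw [h1, tmv_dotProduct_sum, tmv_sum_dotProduct]
  rw [Finset.mul_sum, ← Finset.sum_sub_distrib]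
  refine Finset.sum_congr rfl fun i _ => ?_
  rw [dotProduct_smul, smul_dotProduct]
  simp only [smul_eq_mul]
  ring

lemma tmv_g_contAt {n : ℕ} (B : Matrix (Fin n) (Fin n) ℝ) (b : Fin n → ℝ) {lam : ℝ}
    (h : (B - lam • (1 : Matrix (Fin n) (Fin n) ℝ)).det ≠ 0) :
    ContinuousAt (fun t : ℝ => (B - t • (1 : Matrix (Fin n) (Fin n) ℝ))⁻¹ *ᵥ b) lam := by
  have hM : Continuous (fun t : ℝ => B - t • (1 : Matrix (Fin n) (Fin n) ℝ)) :=
    continuous_const.sub (continuous_id.smul continuous_const)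
  have hinv : ContinuousAt Inv.inv (B - lam • (1 : Matrix (Fin n) (Fin n) ℝ)) := by
    apply continuousAt_matrix_inv
    rw [Ring.inverse_eq_inv']
    exact continuousAt_inv₀ h
  have hmv : Continuous (fun M : Matrix (Fin n) (Fin n) ℝ => M *ᵥ b) :=
    continuous_id.matrix_mulVec continuous_const
  exact hmv.continuousAt.comp (ContinuousAt.comp (x := lam) hinv hM.continuousAt)

lemma tmv_arith (s t d lamst lam1 bb xBx : ℝ) (hsnn : 0 ≤ s) (hs2 : s ^ 2 = bb)
    (hq : lamst * t ≤ xBx) (hMq : d = xBx - lam1 * t) (hCS : d ^ 2 ≤ t * bb)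
    (ht : 0 ≤ t) (hgap : s + 1 ≤ lamst - lam1) : t ≤ 1 := by
  by_contra hgt
  push_neg at hgt
  have h3 : (lamst - lam1) * t ≤ d := by nlinarith
  have h4 : (s + 1) * t ≤ d := le_trans (mul_le_mul_of_nonneg_right hgap ht) h3
  have h5 : (0:ℝ) < (s + 1) * t := by nlinarith
  have h6 : ((s + 1) * t) ^ 2 ≤ d ^ 2 := by nlinarith
  have h7 : d ^ 2 ≤ t * s ^ 2 := by nlinarith
  have h8 : (s + 1) ^ 2 * t ≤ (s + 1) ^ 2 * t ^ 2 := by nlinarith [sq_nonneg (s + 1)]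
  have h9 : (s + 1) ^ 2 * t ≤ s ^ 2 * t := by nlinarith
  have h10 : (s + 1) ^ 2 ≤ s ^ 2 :=
    le_of_mul_le_mul_right (by nlinarith) (by linarith : (0:ℝ) < t)
  nlinarith

end Helpers

/-- Under the sufficient condition `|w(c)| > 1`, where
`w(c) = lim_{ε→0⁺} (c·A − λ_min(c·A) + ε)⁻¹ (c·v)`, for each unit `c` there is a
unique unit vector minimizing `c·f` over the sphere, and its Lagrange multiplier
satisfies `λ < λ_min(c·A)`. -/
theorem unique_min_with_multiplier_below {m n : ℕ} (hm : 0 < m) (hn : 0 < n)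
    (A : Fin m → Matrix (Fin n) (Fin n) ℝ) (hA : ∀ i, (A i).IsHermitian)
    (hcA : ∀ c : Fin m → ℝ, (∑ i, c i • A i).IsHermitian)
    (v : Fin m → (Fin n → ℝ))
    (hyp : ∀ c : Fin m → ℝ, (∑ i, c i ^ 2) = 1 →
      ∃ w : Fin n → ℝ,
        Tendsto
          (fun ε : ℝ =>
            ((∑ i, c i • A i) -
              ((⨅ j, (hcA c).eigenvalues j) - ε) • (1 : Matrix (Fin n) (Fin n) ℝ))⁻¹.mulVec
              (∑ i, c i • v i))
          (𝓝[>] 0) (𝓝 w) ∧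
        1 < ∑ i, w i ^ 2) :
    ∀ c : Fin m → ℝ, (∑ i, c i ^ 2) = 1 →
      ∃! x : Fin n → ℝ, (∑ i, x i ^ 2) = 1 ∧
        (∀ z : Fin n → ℝ, (∑ i, z i ^ 2) = 1 →
          (∑ i, c i * (x ⬝ᵥ (A i).mulVec x - 2 * (v i ⬝ᵥ x))) ≤
          (∑ i, c i * (z ⬝ᵥ (A i).mulVec z - 2 * (v i ⬝ᵥ z)))) ∧
        ∃ lam : ℝ, lam < (⨅ j, (hcA c).eigenvalues j) ∧
          ((∑ i, c i • A i) - lam • (1 : Matrix (Fin n) (Fin n) ℝ)).mulVec x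
            = ∑ i, c i • v i := by
  intro c hc
  set lamstar := ⨅ j, (hcA c).eigenvalues j with hls
  set B := ∑ i, c i • A i with hBdef
  set b := ∑ i, c i • v i with hbdef
  have hB : B.IsHermitian := hcA c
  set g : ℝ → (Fin n → ℝ) := fun t => (B - t • (1 : Matrix (Fin n) (Fin n) ℝ))⁻¹ *ᵥ b with hgdef
  have hlseq : lamstar = ⨅ j, hB.eigenvalues j := rfl
  have hsolve : ∀ lam : ℝ, lam < lamstar →
      (B - lam • (1 : Matrix (Fin n) (Fin n) ℝ)) *ᵥ (g lam) = b := by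
    intro lam hlam
    have hpd := tmv_posdef_shift hB (hlseq ▸ hlam)
    have hdet : IsUnit (B - lam • (1 : Matrix (Fin n) (Fin n) ℝ)).det :=
      hpd.det_pos.ne'.isUnit
    show (B - lam • (1 : Matrix (Fin n) (Fin n) ℝ)) *ᵥ
      ((B - lam • (1 : Matrix (Fin n) (Fin n) ℝ))⁻¹ *ᵥ b) = b
    rw [mulVec_mulVec, Matrix.mul_nonsing_inv _ hdet, one_mulVec]
  have hdot_nonneg : ∀ u : Fin n → ℝ, (0:ℝ) ≤ u ⬝ᵥ u :=
    fun u => Finset.sum_nonneg fun i _ => mul_self_nonneg _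
  -- step 1 : a point lam₀ < lamstar with ∑ (g lam₀)² > 1
  obtain ⟨w, hwT, hw1⟩ := hyp c hc
  have hcontsum : Continuous (fun u : Fin n → ℝ => ∑ j, u j ^ 2) :=
    continuous_finset_sum _ fun j _ => (continuous_apply j).pow 2
  have hT2 : Tendsto (fun ε : ℝ => ∑ j, (g (lamstar - ε)) j ^ 2)
      (𝓝[>] (0:ℝ)) (𝓝 (∑ j, w j ^ 2)) := (hcontsum.tendsto w).comp hwT
  have hev : ∀ᶠ ε in 𝓝[>] (0:ℝ), 1 < ∑ j, (g (lamstar - ε)) j ^ 2 :=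
    hT2.eventually (eventually_gt_nhds hw1)
  obtain ⟨ε, hε1, hεpos⟩ := (hev.and self_mem_nhdsWithin).exists
  have hεpos' : (0:ℝ) < ε := hεpos
  set lam₀ : ℝ := lamstar - ε with hlam₀def
  have hlam₀ : lam₀ < lamstar := by simp [hlam₀def]; linarith
  have hφ₀ : 1 < ∑ j, (g lam₀) j ^ 2 := hε1
  -- step 2 : a point lam₁ ≤ lam₀ with ∑ (g lam₁)² ≤ 1
  set s : ℝ := Real.sqrt (b ⬝ᵥ b) with hsdef
  set lam₁ : ℝ := min lam₀ (lamstar - (s + 1)) with hlam₁def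
  have hsnn : 0 ≤ s := Real.sqrt_nonneg _
  have hs2 : s ^ 2 = b ⬝ᵥ b := Real.sq_sqrt (hdot_nonneg b)
  have hle : lam₁ ≤ lam₀ := min_le_left _ _
  have hlam₁lt : lam₁ < lamstar := lt_of_le_of_lt hle hlam₀
  have hgap : s + 1 ≤ lamstar - lam₁ := by
    have := min_le_right lam₀ (lamstar - (s + 1))
    have h2 : lam₁ ≤ lamstar - (s + 1) := this
    linarith
  have hφ₁ : ∑ j, (g lam₁) j ^ 2 ≤ 1 := by
    set x₁ := g lam₁ with hx₁def
    have hx₁ : (B - lam₁ • (1 : Matrix (Fin n) (Fin n) ℝ)) *ᵥ x₁ = b := hsolve lam₁ hlam₁lt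
    have hq : lamstar * (x₁ ⬝ᵥ x₁) ≤ x₁ ⬝ᵥ B *ᵥ x₁ := tmv_quad_lb hB x₁
    have hMq : x₁ ⬝ᵥ (B - lam₁ • (1 : Matrix (Fin n) (Fin n) ℝ)) *ᵥ x₁
        = x₁ ⬝ᵥ B *ᵥ x₁ - lam₁ * (x₁ ⬝ᵥ x₁) := tmv_dot_shift B lam₁ x₁ x₁
    have hdb : x₁ ⬝ᵥ (B - lam₁ • (1 : Matrix (Fin n) (Fin n) ℝ)) *ᵥ x₁ = x₁ ⬝ᵥ b := by rw [hx₁]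
    have hCS : (x₁ ⬝ᵥ b) ^ 2 ≤ (x₁ ⬝ᵥ x₁) * (b ⬝ᵥ b) := by
      have h := Finset.sum_mul_sq_le_sq_mul_sq Finset.univ x₁ b
      have e1 : x₁ ⬝ᵥ x₁ = ∑ i, x₁ i ^ 2 := (tmv_sum_sq_eq_dot x₁).symm
      have e2 : b ⬝ᵥ b = ∑ i, b i ^ 2 := (tmv_sum_sq_eq_dot b).symm
      rw [e1, e2]
      exact h
    have ht : 0 ≤ x₁ ⬝ᵥ x₁ := hdot_nonneg x₁
    have hdot1 : x₁ ⬝ᵥ x₁ ≤ 1 :=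
      tmv_arith s (x₁ ⬝ᵥ x₁) (x₁ ⬝ᵥ b) lamstar lam₁ (b ⬝ᵥ b) (x₁ ⬝ᵥ B *ᵥ x₁)
        hsnn hs2 hq (by rw [← hdb, hMq]) hCS ht hgap
    rw [tmv_sum_sq_eq_dot]
    exact hdot1
  -- step 3 : IVT gives lam with ∑ (g lam)² = 1
  have hcontOn : ContinuousOn (fun t => ∑ j, (g t) j ^ 2) (Set.Icc lam₁ lam₀) := by
    intro t htmem
    have htlt : t < lamstar := lt_of_le_of_lt htmem.2 hlam₀
    have hdet : (B - t • (1 : Matrix (Fin n) (Fin n) ℝ)).det ≠ 0 :=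
      (tmv_posdef_shift hB (hlseq ▸ htlt)).det_pos.ne'
    exact (hcontsum.continuousAt.comp (tmv_g_contAt B b hdet)).continuousWithinAt
  obtain ⟨lam, hlamIcc, hlameq⟩ :=
    intermediate_value_Icc hle hcontOn ⟨hφ₁, hφ₀.le⟩
  have hlamlt : lam < lamstar := lt_of_le_of_lt hlamIcc.2 hlam₀
  set x := g lam with hxdef
  have hxsol : (B - lam • (1 : Matrix (Fin n) (Fin n) ℝ)) *ᵥ x = b := hsolve lam hlamlt
  have hxsum : (∑ i, x i ^ 2) = 1 := hlameq
  have hxunit : x ⬝ᵥ x = 1 := by rw [← tmv_sum_sq_eq_dot]; exact hxsum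
  have hpd := tmv_posdef_shift hB (hlseq ▸ hlamlt)
  -- minimality of x
  have hmin : ∀ z : Fin n → ℝ, (∑ i, z i ^ 2) = 1 →
      (∑ i, c i * (x ⬝ᵥ (A i).mulVec x - 2 * (v i ⬝ᵥ x))) ≤
      (∑ i, c i * (z ⬝ᵥ (A i).mulVec z - 2 * (v i ⬝ᵥ z))) := by
    intro z hz
    have hzunit : z ⬝ᵥ z = 1 := by rw [← tmv_sum_sq_eq_dot]; exact hz
    rw [tmv_cf_eq, tmv_cf_eq, ← hBdef, ← hbdef]
    have hid := tmv_key_identity hB hxsol hxunit hzunit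
    have hnn : 0 ≤ (z - x) ⬝ᵥ (B - lam • (1 : Matrix (Fin n) (Fin n) ℝ)) *ᵥ (z - x) := by
      rcases eq_or_ne z x with h | h
      · simp [h]
      · have := hpd.dotProduct_mulVec_pos (x := z - x) (sub_ne_zero.mpr h)
        rw [star_trivial] at this
        exact this.le
    linarith
  -- strictness : any unit minimizer equals x
  refine ⟨x, ⟨hxsum, hmin, lam, hlamlt, hxsol⟩, ?_⟩
  rintro y ⟨hysum, hymin, -⟩
  have hyunit : y ⬝ᵥ y = 1 := by rw [← tmv_sum_sq_eq_dot]; exact hysum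
  by_contra hne
  have h1 := hymin x hxsum
  have h2 := hmin y hysum
  rw [tmv_cf_eq, tmv_cf_eq, ← hBdef, ← hbdef] at h1 h2
  have hid := tmv_key_identity hB hxsol hxunit hyunit
  have hpos : 0 < (y - x) ⬝ᵥ (B - lam • (1 : Matrix (Fin n) (Fin n) ℝ)) *ᵥ (y - x) := by
    have := hpd.dotProduct_mulVec_pos (x := y - x) (sub_ne_zero.mpr hne)
    rwa [star_trivial] at this
  linarith
end
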